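/- Define A(l,d) for integers l ≥ 0, d ≥ 0 by A(l,0) = 0, A(l,d) = 2^l − 1 for d ≥ l, and A(l,d) = A(l−1,d−1) + A(l−1,d) + 1 for l > d > 0. Then for all l > d ≥ 0: A(l,d) = Σ_{i=0}^{d} (2^i − 1)·C(l−i−1, l−d−1) + C(l,d) − 1, where C(·,·) denotes binomial coefficients. -/

import Mathlib

/-- The recursively defined function `A`: `A(l,0) = 0`, `A(l,d) = 2^l − 1` for `d ≥ l`,
and `A(l,d) = A(l−1,d−1) + A(l−1,d) + 1` for `l > d > 0`. -/
def Arec : ℕ → ℕ → ℕ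
  | 0, _ => 0
  | _, 0 => 0
  | l + 1, d + 1 =>
    if l + 1 ≤ d + 1 then 2 ^ (l + 1) - 1
    else Arec l d + Arec l (d + 1) + 1

lemma sum_pows (d : ℕ) : ∑ i ∈ Finset.range (d + 1), (2 ^ i - 1) = 2 ^ (d + 1) - (d + 2) := by
  induction d with
  | zero => simp
  | succ n ih =>
      rw [Finset.sum_range_succ, ih]
      have h1 : n + 2 ≤ 2 ^ (n + 1) := Nat.lt_two_pow_self (n := n + 1)
      have h2 : 2 ^ (n + 2) = 2 * 2 ^ (n + 1) := by ring
      omega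

lemma Arec_diag (n : ℕ) : Arec n n = 2 ^ n - 1 := by
  cases n with
  | zero => simp [Arec]
  | succ n => rw [Arec, if_pos le_rfl]

lemma Arec_near_diag (n : ℕ) : Arec (n + 1) n = 2 ^ (n + 1) - 2 := by
  induction n with
  | zero => simp [Arec]
  | succ n ih =>
      rw [Arec, if_neg (by omega), ih, Arec_diag]
      have h1 : 2 ≤ 2 ^ (n + 1) := Nat.one_lt_two_pow (by omega)
      have h2 : 2 ^ (n + 2) = 2 * 2 ^ (n + 1) := by ring
      omega

/-- For all `l > d ≥ 0`:
`A(l,d) = Σ_{i=0}^{d} (2^i − 1)·C(l−i−1, l−d−1) + C(l,d) − 1`. -/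
theorem Arec_explicit (l d : ℕ) (h : d < l) :
    Arec l d =
      (∑ i ∈ Finset.range (d + 1), (2 ^ i - 1) * Nat.choose (l - i - 1) (l - d - 1)) +
        Nat.choose l d - 1 := by
  induction l generalizing d with
  | zero => omega
  | succ l ih =>
    cases d with
    | zero => simp [Arec]
    | succ d =>
      rcases Nat.lt_or_ge (d + 1) l with hlt | hge
      · -- main case: d + 1 < l, write l = d + 2 + k
        obtain ⟨k, rfl⟩ : ∃ k, l = d + 2 + k := ⟨l - (d + 2), by omega⟩
        have H1 := ih d (by omega)
        have H2 := ih (d + 1) (by omega)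
        rw [Arec, if_neg (by omega), H1, H2]
        have key : (∑ i ∈ Finset.range (d + 2),
              (2 ^ i - 1) * Nat.choose (d + 2 + k + 1 - i - 1) (d + 2 + k + 1 - (d + 1) - 1))
            = (∑ i ∈ Finset.range (d + 1),
                (2 ^ i - 1) * Nat.choose (d + 2 + k - i - 1) (d + 2 + k - d - 1))
              + (∑ i ∈ Finset.range (d + 1 + 1),
                (2 ^ i - 1) * Nat.choose (d + 2 + k - i - 1) (d + 2 + k - (d + 1) - 1)) := by
          have hA : ∀ i ∈ Finset.range (d + 2),
              (2 ^ i - 1) * Nat.choose (d + 2 + k + 1 - i - 1) (d + 2 + k + 1 - (d + 1) - 1)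
              = (2 ^ i - 1) * Nat.choose (d + 1 + k - i) (k + 1)
                + (2 ^ i - 1) * Nat.choose (d + 1 + k - i) k := by
            intro i hi
            rw [Finset.mem_range] at hi
            have e1 : d + 2 + k + 1 - i - 1 = (d + 1 + k - i) + 1 := by omega
            have e2 : d + 2 + k + 1 - (d + 1) - 1 = k + 1 := by omega
            rw [e1, e2, Nat.choose_succ_succ', mul_add]
            ring
          rw [Finset.sum_congr rfl hA, Finset.sum_add_distrib]
          congr 1
          · -- first piece: range(d+2) of choose (d+1+k-i) (k+1) equals range(d+1) piece
            rw [Finset.sum_range_succ]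
            have e3 : d + 1 + k - (d + 1) = k := by omega
            rw [e3, Nat.choose_succ_self, mul_zero, add_zero]
            refine Finset.sum_congr rfl ?_
            intro i hi
            rw [Finset.mem_range] at hi
            congr 2 <;> omega
          · refine Finset.sum_congr rfl ?_
            intro i hi
            rw [Finset.mem_range] at hi
            congr 2 <;> omega
        rw [key]
        have hpas : Nat.choose (d + 2 + k + 1) (d + 1)
            = Nat.choose (d + 2 + k) d + Nat.choose (d + 2 + k) (d + 1) :=
          Nat.choose_succ_succ _ _
        rw [hpas]
        have c1 : 0 < Nat.choose (d + 2 + k) d := Nat.choose_pos (by omega)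
        have c2 : 0 < Nat.choose (d + 2 + k) (d + 1) := Nat.choose_pos (by omega)
        omega
      · -- boundary case: l = d + 1
        have hl : l = d + 1 := by omega
        subst hl
        have e0 : d + 1 + 1 - (d + 1) - 1 = 0 := by omega
        have hsum : (∑ i ∈ Finset.range (d + 2),
            (2 ^ i - 1) * Nat.choose (d + 1 + 1 - i - 1) (d + 1 + 1 - (d + 1) - 1))
            = 2 ^ (d + 2) - (d + 3) := by
          rw [show (d + 2) = (d + 1) + 1 from rfl, ← sum_pows (d + 1)]
          refine Finset.sum_congr rfl ?_
          intro i hi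
          rw [e0, Nat.choose_zero_right, mul_one]
        rw [hsum, Arec_near_diag, Nat.choose_succ_self_right]
        have h1 : d + 3 ≤ 2 ^ (d + 2) := Nat.lt_two_pow_self (n := d + 2)
        have h2 : (2:ℕ) ^ (d + 1 + 1) = 2 ^ (d + 2) := rfl
        omega
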